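/- In a local deterministic hidden-variable model reproducing perfect correlations, parameter-independence and outcome-independence force determinism: if P_{XY|ABZ} = P_{X|AZ} × P_{Y|BZ} and for each a there exists b_a with P(X=Y | A=a, B=b_a, Z=z) = 1, then for every a and z the distribution P_{X|az} is deterministic, i.e., there exists x with P_{X|az}(x) = 1. -/
import Mathlib


open Finset

/-- In a local hidden-variable model (satisfying parameter-independence and
outcome-independence, i.e. `P_{XY|ABZ}(x,y|a,b,z) = P_{X|AZ}(x|a,z)·P_{Y|BZ}(y|b,z)`)
that reproduces perfect correlations — for each setting `a` there is a setting `b_a`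
with `P(X = Y | A = a, B = b_a, Z = z) = 1` — the local distributions are
deterministic: for every `a` and `z` there exists `x` with `P_{X|az}(x) = 1`. -/
theorem local_hidden_variables_perfect_correlations_deterministic
    {A B Z : Type*} [Fintype A] [Fintype B] [Fintype Z]
    (pX : A → Z → Fin 2 → ℝ) (pY : B → Z → Fin 2 → ℝ)
    (hpX0 : ∀ a z x, 0 ≤ pX a z x) (hpX1 : ∀ a z, ∑ x, pX a z x = 1)
    (hpY0 : ∀ b z y, 0 ≤ pY b z y) (hpY1 : ∀ b z, ∑ y, pY b z y = 1)
    -- perfect correlations: P_{XY|ABZ} factorizes and P(X=Y|a,b_a,z) = 1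
    (hperf : ∀ a : A, ∃ b : B, ∀ z : Z, ∑ x, pX a z x * pY b z x = 1) :
    ∀ (a : A) (z : Z), ∃ x : Fin 2, pX a z x = 1 := by
  intro a z
  obtain ⟨b, hb⟩ := hperf a
  have hp := hpX1 a z
  have hq := hpY1 b z
  have hc := hb z
  simp only [Fin.sum_univ_two] at hp hq hc
  have p0 := hpX0 a z 0
  have p1 := hpX0 a z 1
  have q0 := hpY0 b z 0
  have q1 := hpY0 b z 1
  by_cases h0 : pX a z 0 = 1
  · exact ⟨0, h0⟩
  · refine ⟨1, ?_⟩
    have m0 : 0 ≤ pX a z 0 * (1 - pY b z 0) :=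
      mul_nonneg p0 (by linarith)
    have m1 : 0 ≤ pX a z 1 * (1 - pY b z 1) :=
      mul_nonneg p1 (by linarith)
    have e0 : pX a z 0 * (1 - pY b z 0) = 0 := by nlinarith
    have e1 : pX a z 1 * (1 - pY b z 1) = 0 := by nlinarith
    have hx0 : 0 < pX a z 1 := by
      rcases lt_or_eq_of_le p1 with h | h
      · exact h
      · exfalso; apply h0; linarith
    have hq1 : pY b z 1 = 1 := by
      rcases mul_eq_zero.1 e1 with h | h
      · exact absurd h.symm (ne_of_lt hx0)
      · linarith
    by_contra hx1
    have hx0' : 0 < pX a z 0 := by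
      rcases lt_or_eq_of_le p0 with h | h
      · exact h
      · exfalso; apply hx1; linarith
    have hq0 : pY b z 0 = 1 := by
      rcases mul_eq_zero.1 e0 with h | h
      · exact absurd h.symm (ne_of_lt hx0')
      · linarith
    linarith
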